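/- Let M be a finite monoid, α : A* → M a morphism, and for n ∈ ℕ let C_n ⊆ M^n be the set of i-chains of length n (tuples (s₁,…,sₙ) such that for every k there exist words w₁ ≤ᵏᵢ ⋯ ≤ᵏᵢ wₙ with α(w_j) = s_j). Then C_n is a submonoid of M^n under componentwise multiplication. -/

import Mathlib

/-- First-order formulas over words on alphabet `A`, with de Bruijn indexed
variables, unary letter predicates `P_a x` and the order predicate `x < y`. -/
inductive FO (A : Type) : Type
  | letter : A → ℕ → FO A
  | lt : ℕ → ℕ → FO A
  | not : FO A → FO A
  | and : FO A → FO A → FO A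
  | or : FO A → FO A → FO A
  | ex : FO A → FO A
  | all : FO A → FO A

namespace FO

variable {A : Type}

/-- Satisfaction of a formula in a word `w` under an assignment `v` of
variables to positions; quantifiers range over the positions of `w`,
`letter a x` holds when position `v x` carries the letter `a`. -/
def Sat (w : List A) : (ℕ → ℕ) → FO A → Prop
  | v, letter a x => w[(v x)]? = some a
  | v, lt x y => v x < v y ∧ v y < w.length
  | v, not φ => ¬ Sat w v φ
  | v, and φ ψ => Sat w v φ ∧ Sat w v ψ
  | v, or φ ψ => Sat w v φ ∨ Sat w v ψ
  | v, ex φ => ∃ p < w.length, Sat w (fun n => Nat.casesOn n p v) φ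
  | v, all φ => ∀ p < w.length, Sat w (fun n => Nat.casesOn n p v) φ

/-- Quantifier rank of a formula. -/
def qr : FO A → ℕ
  | letter _ _ => 0
  | lt _ _ => 0
  | not φ => qr φ
  | and φ ψ => max (qr φ) (qr ψ)
  | or φ ψ => max (qr φ) (qr ψ)
  | ex φ => qr φ + 1
  | all φ => qr φ + 1

/-- A bound on free (de Bruijn) variables: all free variables are `< fvBound φ`. -/
def fvBound : FO A → ℕ
  | letter _ x => x + 1
  | lt x y => max x y + 1
  | not φ => fvBound φ
  | and φ ψ => max (fvBound φ) (fvBound ψ)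
  | or φ ψ => max (fvBound φ) (fvBound ψ)
  | ex φ => fvBound φ - 1
  | all φ => fvBound φ - 1

/-- A sentence is a formula with no free variables. -/
def IsSentence (φ : FO A) : Prop := fvBound φ = 0

/-- Quantifier-free formulas. -/
def QF : FO A → Prop
  | letter _ _ => True
  | lt _ _ => True
  | not φ => QF φ
  | and φ ψ => QF φ ∧ QF ψ
  | or φ ψ => QF φ ∧ QF ψ
  | ex _ => False
  | all _ => False

mutual
  /-- `Σᵢ` formulas: quantifier-free formulas, positive boolean combinations,
  existential quantification over `Σᵢ` (for `i ≥ 1`), and every `Πᵢ` formula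
  is `Σ_{i+1}`; this captures formulas whose prenex normal form has at most
  `i` quantifier blocks starting with an existential block. -/
  inductive IsSigma : ℕ → FO A → Prop
    | of_qf {i : ℕ} {φ : FO A} : QF φ → IsSigma i φ
    | of_pi {i : ℕ} {φ : FO A} : IsPi i φ → IsSigma (i + 1) φ
    | and {i : ℕ} {φ ψ : FO A} : IsSigma i φ → IsSigma i ψ → IsSigma i (FO.and φ ψ)
    | or {i : ℕ} {φ ψ : FO A} : IsSigma i φ → IsSigma i ψ → IsSigma i (FO.or φ ψ)
    | ex {i : ℕ} {φ : FO A} : IsSigma (i + 1) φ → IsSigma (i + 1) (FO.ex φ)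
  /-- `Πᵢ` formulas, dual to `Σᵢ`. -/
  inductive IsPi : ℕ → FO A → Prop
    | of_qf {i : ℕ} {φ : FO A} : QF φ → IsPi i φ
    | of_sigma {i : ℕ} {φ : FO A} : IsSigma i φ → IsPi (i + 1) φ
    | and {i : ℕ} {φ ψ : FO A} : IsPi i φ → IsPi i ψ → IsPi i (FO.and φ ψ)
    | or {i : ℕ} {φ ψ : FO A} : IsPi i φ → IsPi i ψ → IsPi i (FO.or φ ψ)
    | all {i : ℕ} {φ : FO A} : IsPi (i + 1) φ → IsPi (i + 1) (FO.all φ)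
end

/-- The preorder `w ≤ᵏᵢ w'`: every `Σᵢ` sentence of quantifier rank at most
`k` satisfied by `w` is satisfied by `w'`. -/
def sle (i k : ℕ) (w w' : List A) : Prop :=
  ∀ φ : FO A, IsSigma i φ → qr φ ≤ k → IsSentence φ →
    Sat w (fun _ => 0) φ → Sat w' (fun _ => 0) φ

theorem IsSigma.mono {i : ℕ} {φ : FO A} (h : IsSigma i φ) : IsSigma (i+1) φ :=
  IsSigma.rec (motive_1 := fun i φ _ => IsSigma (i+1) φ) (motive_2 := fun i φ _ => IsPi (i+1) φ)
    (fun h => .of_qf h) (fun _ ih => .of_pi ih) (fun _ _ a b => .and a b)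
    (fun _ _ a b => .or a b) (fun _ ih => .ex ih)
    (fun h => .of_qf h) (fun _ ih => .of_sigma ih) (fun _ _ a b => .and a b)
    (fun _ _ a b => .or a b) (fun _ ih => .all ih) h

theorem IsPi.mono {i : ℕ} {φ : FO A} (h : IsPi i φ) : IsPi (i+1) φ :=
  IsPi.rec (motive_1 := fun i φ _ => IsSigma (i+1) φ) (motive_2 := fun i φ _ => IsPi (i+1) φ)
    (fun h => .of_qf h) (fun _ ih => .of_pi ih) (fun _ _ a b => .and a b)
    (fun _ _ a b => .or a b) (fun _ ih => .ex ih)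
    (fun h => .of_qf h) (fun _ ih => .of_sigma ih) (fun _ _ a b => .and a b)
    (fun _ _ a b => .or a b) (fun _ ih => .all ih) h

theorem IsSigma.mono_le {i j : ℕ} {φ : FO A} (h : IsSigma i φ) (hij : i ≤ j) : IsSigma j φ := by
  induction hij with
  | refl => exact h
  | step _ ih => exact ih.mono

theorem IsPi.mono_le {i j : ℕ} {φ : FO A} (h : IsPi i φ) (hij : i ≤ j) : IsPi j φ := by
  induction hij with
  | refl => exact h
  | step _ ih => exact ih.mono

-- inversion lemmas, by strong induction on i
theorem not_inv : ∀ i : ℕ, ∀ {φ : FO A}, (IsSigma i (FO.not φ) → QF φ) ∧ (IsPi i (FO.not φ) → QF φ) := by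
  intro i
  induction i with
  | zero =>
    refine fun {φ} => ⟨fun h => ?_, fun h => ?_⟩ <;> cases h <;> assumption
  | succ i ih =>
    refine fun {φ} => ⟨fun h => ?_, fun h => ?_⟩
    · cases h with
      | of_qf h => exact h
      | of_pi h => exact (ih.2) h
    · cases h with
      | of_qf h => exact h
      | of_sigma h => exact (ih.1) h


theorem and_inv : ∀ i : ℕ, ∀ {φ ψ : FO A},
    (IsSigma i (FO.and φ ψ) → IsSigma i φ ∧ IsSigma i ψ) ∧
    (IsPi i (FO.and φ ψ) → IsPi i φ ∧ IsPi i ψ) := by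
  intro i
  induction i with
  | zero =>
    refine fun {φ ψ} => ⟨fun h => ?_, fun h => ?_⟩
    · cases h with
      | of_qf h => exact ⟨.of_qf h.1, .of_qf h.2⟩
      | and h1 h2 => exact ⟨h1, h2⟩
    · cases h with
      | of_qf h => exact ⟨.of_qf h.1, .of_qf h.2⟩
      | and h1 h2 => exact ⟨h1, h2⟩
  | succ i ih =>
    refine fun {φ ψ} => ⟨fun h => ?_, fun h => ?_⟩
    · cases h with
      | of_qf h => exact ⟨.of_qf h.1, .of_qf h.2⟩
      | of_pi h => obtain ⟨h1, h2⟩ := ih.2 h; exact ⟨.of_pi h1, .of_pi h2⟩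
      | and h1 h2 => exact ⟨h1, h2⟩
    · cases h with
      | of_qf h => exact ⟨.of_qf h.1, .of_qf h.2⟩
      | of_sigma h => obtain ⟨h1, h2⟩ := ih.1 h; exact ⟨.of_sigma h1, .of_sigma h2⟩
      | and h1 h2 => exact ⟨h1, h2⟩

theorem or_inv : ∀ i : ℕ, ∀ {φ ψ : FO A},
    (IsSigma i (FO.or φ ψ) → IsSigma i φ ∧ IsSigma i ψ) ∧
    (IsPi i (FO.or φ ψ) → IsPi i φ ∧ IsPi i ψ) := by
  intro i
  induction i with
  | zero =>
    refine fun {φ ψ} => ⟨fun h => ?_, fun h => ?_⟩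
    · cases h with
      | of_qf h => exact ⟨.of_qf h.1, .of_qf h.2⟩
      | or h1 h2 => exact ⟨h1, h2⟩
    · cases h with
      | of_qf h => exact ⟨.of_qf h.1, .of_qf h.2⟩
      | or h1 h2 => exact ⟨h1, h2⟩
  | succ i ih =>
    refine fun {φ ψ} => ⟨fun h => ?_, fun h => ?_⟩
    · cases h with
      | of_qf h => exact ⟨.of_qf h.1, .of_qf h.2⟩
      | of_pi h => obtain ⟨h1, h2⟩ := ih.2 h; exact ⟨.of_pi h1, .of_pi h2⟩
      | or h1 h2 => exact ⟨h1, h2⟩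
    · cases h with
      | of_qf h => exact ⟨.of_qf h.1, .of_qf h.2⟩
      | of_sigma h => obtain ⟨h1, h2⟩ := ih.1 h; exact ⟨.of_sigma h1, .of_sigma h2⟩
      | or h1 h2 => exact ⟨h1, h2⟩

theorem ex_inv : ∀ i : ℕ, ∀ {φ : FO A},
    (IsSigma i (FO.ex φ) → 1 ≤ i ∧ IsSigma i φ) ∧
    (IsPi i (FO.ex φ) → ∃ i₀, i = i₀ + 1 ∧ IsSigma i₀ (FO.ex φ)) := by
  intro i
  induction i with
  | zero =>
    refine fun {φ} => ⟨fun h => ?_, fun h => ?_⟩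
    · cases h with | of_qf h => exact h.elim
    · cases h with | of_qf h => exact h.elim
  | succ i ih =>
    refine fun {φ} => ⟨fun h => ?_, fun h => ?_⟩
    · cases h with
      | of_qf h => exact h.elim
      | of_pi h =>
        obtain ⟨i₀, hi, hs⟩ := ih.2 h
        obtain ⟨-, hs'⟩ := ih.1 (hs.mono_le (by omega))
        exact ⟨Nat.le_add_left 1 i, hs'.mono⟩
      | ex h => exact ⟨Nat.le_add_left 1 i, h⟩
    · cases h with
      | of_qf h => exact h.elim
      | of_sigma h => exact ⟨i, rfl, h⟩

theorem all_inv : ∀ i : ℕ, ∀ {φ : FO A},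
    (IsPi i (FO.all φ) → 1 ≤ i ∧ IsPi i φ) ∧
    (IsSigma i (FO.all φ) → ∃ i₀, i = i₀ + 1 ∧ IsPi i₀ (FO.all φ)) := by
  intro i
  induction i with
  | zero =>
    refine fun {φ} => ⟨fun h => ?_, fun h => ?_⟩
    · cases h with | of_qf h => exact h.elim
    · cases h with | of_qf h => exact h.elim
  | succ i ih =>
    refine fun {φ} => ⟨fun h => ?_, fun h => ?_⟩
    · cases h with
      | of_qf h => exact h.elim
      | of_sigma h =>
        obtain ⟨i₀, hi, hs⟩ := ih.2 h
        obtain ⟨-, hs'⟩ := ih.1 (hs.mono_le (by omega))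
        exact ⟨Nat.le_add_left 1 i, hs'.mono⟩
      | all h => exact ⟨Nat.le_add_left 1 i, h⟩
    · cases h with
      | of_qf h => exact h.elim
      | of_pi h => exact ⟨i, rfl, h⟩

/-! ### Option-formulas (`none` = True) and DNF decompositions -/

/-- Satisfaction for optional formulas, `none` meaning `True`. -/
def SatO (w : List A) (v : ℕ → ℕ) : Option (FO A) → Prop
  | none => True
  | some f => Sat w v f

/-- Conjunction of optional formulas. -/
def andO : Option (FO A) → Option (FO A) → Option (FO A)
  | none, b => b
  | some f, none => some f
  | some f, some g => some (FO.and f g)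

/-- A quantifier-free tautology (to be used under a binder). -/
def tru : FO A := FO.not (FO.lt 0 0)

/-- Turn an optional formula into a formula (used under a binder). -/
def toF : Option (FO A) → FO A
  | none => tru
  | some f => f

/-- Disjunction of a list of formulas (`[]` = False). -/
def bigOr : List (FO A) → FO A
  | [] => FO.lt 0 0
  | f :: l => FO.or f (bigOr l)

/-- Conjunction of a list of optional formulas. -/
def bigAndO : List (Option (FO A)) → Option (FO A)
  | [] => none
  | o :: l => andO o (bigAndO l)

@[simp] theorem satO_none {w : List A} {v} : SatO w v none ↔ True := Iff.rfl
@[simp] theorem satO_some {w : List A} {v f} : SatO w v (some f) ↔ Sat w v f := Iff.rfl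

@[simp] theorem satO_andO {w : List A} {v a b} : SatO w v (andO a b) ↔ (SatO w v a ∧ SatO w v b) := by
  cases a <;> cases b <;> simp [SatO, andO, Sat]

@[simp] theorem sat_tru {w : List A} {v} : Sat w v (tru : FO A) := by
  simp [tru, Sat]

@[simp] theorem sat_toF {w : List A} {v o} : Sat w v (toF o) ↔ SatO w v o := by
  cases o <;> simp [toF, SatO]

theorem sat_bigOr {w : List A} {v} {l : List (FO A)} :
    Sat w v (bigOr l) ↔ ∃ f ∈ l, Sat w v f := by
  induction l with
  | nil => simp [bigOr, Sat]
  | cons f l ih => simp [bigOr, Sat, ih]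

theorem satO_bigAndO {w : List A} {v} {l : List (Option (FO A))} :
    SatO w v (bigAndO l) ↔ ∀ o ∈ l, SatO w v o := by
  induction l with
  | nil => simp [bigAndO]
  | cons o l ih => simp [bigAndO, ih]

/-- A "split pair": a formula about the left word and one about the right word. -/
abbrev Pair (A : Type) := Option (FO A) × Option (FO A)

def SatP (u v : List A) (vu vv : ℕ → ℕ) (p : Pair A) : Prop :=
  SatO u vu p.1 ∧ SatO v vv p.2

def SatD (u v : List A) (vu vv : ℕ → ℕ) (L : List (Pair A)) : Prop :=
  ∃ p ∈ L, SatP u v vu vv p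

@[simp] theorem satD_nil {u v : List A} {vu vv} : SatD u v vu vv [] ↔ False := by
  simp [SatD]

theorem satD_cons {u v : List A} {vu vv p} {L : List (Pair A)} :
    SatD u v vu vv (p :: L) ↔ SatP u v vu vv p ∨ SatD u v vu vv L := by
  simp [SatD]

theorem satD_append {u v : List A} {vu vv} {L1 L2 : List (Pair A)} :
    SatD u v vu vv (L1 ++ L2) ↔ SatD u v vu vv L1 ∨ SatD u v vu vv L2 := by
  simp [SatD, List.mem_append, or_and_right, exists_or]

/-- Conjunction of two DNFs. -/
def andD (L1 L2 : List (Pair A)) : List (Pair A) :=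
  L1.flatMap fun p => L2.map fun q => (andO p.1 q.1, andO p.2 q.2)

theorem satD_andD {u v : List A} {vu vv} {L1 L2 : List (Pair A)} :
    SatD u v vu vv (andD L1 L2) ↔ SatD u v vu vv L1 ∧ SatD u v vu vv L2 := by
  constructor
  · rintro ⟨p, hp, hs⟩
    simp only [andD, List.mem_flatMap, List.mem_map] at hp
    obtain ⟨a, ha, b, hb, rfl⟩ := hp
    obtain ⟨h1, h2⟩ := hs
    simp only [satO_andO] at h1 h2
    exact ⟨⟨a, ha, h1.1, h2.1⟩, ⟨b, hb, h1.2, h2.2⟩⟩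
  · rintro ⟨⟨a, ha, hs1⟩, ⟨b, hb, hs2⟩⟩
    refine ⟨(andO a.1 b.1, andO a.2 b.2), ?_, ?_⟩
    · simp only [andD, List.mem_flatMap, List.mem_map]
      exact ⟨a, ha, b, hb, rfl⟩
    · constructor <;> simp only [satO_andO]
      exacts [⟨hs1.1, hs2.1⟩, ⟨hs1.2, hs2.2⟩]

theorem mem_andD {p : Pair A} {L1 L2 : List (Pair A)} (h : p ∈ andD L1 L2) :
    ∃ a ∈ L1, ∃ b ∈ L2, p = (andO a.1 b.1, andO a.2 b.2) := by
  simp only [andD, List.mem_flatMap, List.mem_map] at h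
  obtain ⟨a, ha, b, hb, rfl⟩ := h
  exact ⟨a, ha, b, hb, rfl⟩

/-- Negation of a pair, as a DNF. -/
def negP : Pair A → List (Pair A)
  | (none, none) => []
  | (none, some g) => [(none, some (FO.not g))]
  | (some f, none) => [(some (FO.not f), none)]
  | (some f, some g) => [(some (FO.not f), none), (none, some (FO.not g))]

theorem satD_negP {u v : List A} {vu vv} {p : Pair A} :
    SatD u v vu vv (negP p) ↔ ¬ SatP u v vu vv p := by
  obtain ⟨a, b⟩ := p
  cases a <;> cases b <;>
    simp [negP, SatD, SatP, SatO, Sat, not_and_or, imp_iff_not_or]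

/-- Negation of a DNF. -/
def notD : List (Pair A) → List (Pair A)
  | [] => [(none, none)]
  | p :: L => andD (negP p) (notD L)

theorem satD_notD {u v : List A} {vu vv} {L : List (Pair A)} :
    SatD u v vu vv (notD L) ↔ ¬ SatD u v vu vv L := by
  induction L with
  | nil => simp [notD, SatD, SatP, SatO]
  | cons p L ih =>
    simp [notD, satD_andD, ih, satD_cons, satD_negP, not_or]


/-- Cons for valuations. -/
def vcons (p : ℕ) (v : ℕ → ℕ) : ℕ → ℕ := fun n => Nat.casesOn n p v

/-- Cons for side assignments. -/
def bcons (b : Bool) (σ : ℕ → Bool) : ℕ → Bool := fun n => Nat.casesOn n b σ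

@[simp] theorem sat_not {w : List A} {v φ} : Sat w v (FO.not φ) ↔ ¬ Sat w v φ := Iff.rfl
@[simp] theorem sat_and {w : List A} {v φ ψ} : Sat w v (FO.and φ ψ) ↔ Sat w v φ ∧ Sat w v ψ := Iff.rfl
@[simp] theorem sat_or {w : List A} {v φ ψ} : Sat w v (FO.or φ ψ) ↔ Sat w v φ ∨ Sat w v ψ := Iff.rfl
theorem sat_ex {w : List A} {v φ} :
    Sat w v (FO.ex φ) ↔ ∃ p < w.length, Sat w (vcons p v) φ := Iff.rfl
theorem sat_all {w : List A} {v φ} :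
    Sat w v (FO.all φ) ↔ ∀ p < w.length, Sat w (vcons p v) φ := Iff.rfl

/-- Existential quantification over the left word. -/
def exU (L : List (Pair A)) : List (Pair A) :=
  L.map fun p => (some (FO.ex (toF p.1)), p.2)

/-- Existential quantification over the right word. -/
def exV (L : List (Pair A)) : List (Pair A) :=
  L.map fun p => (p.1, some (FO.ex (toF p.2)))

theorem satD_exU {u v : List A} {vu vv} {L : List (Pair A)} :
    SatD u v vu vv (exU L) ↔ ∃ q < u.length, SatD u v (vcons q vu) vv L := by
  constructor
  · rintro ⟨p', hp', hs⟩
    simp only [exU, List.mem_map] at hp'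
    obtain ⟨p, hp, rfl⟩ := hp'
    obtain ⟨q, hq, hf⟩ := sat_ex.mp hs.1
    exact ⟨q, hq, p, hp, sat_toF.mp hf, hs.2⟩
  · rintro ⟨q, hq, p, hp, h1, h2⟩
    exact ⟨_, List.mem_map.mpr ⟨p, hp, rfl⟩, sat_ex.mpr ⟨q, hq, sat_toF.mpr h1⟩, h2⟩

theorem satD_exV {u v : List A} {vu vv} {L : List (Pair A)} :
    SatD u v vu vv (exV L) ↔ ∃ q < v.length, SatD u v vu (vcons q vv) L := by
  constructor
  · rintro ⟨p', hp', hs⟩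
    simp only [exV, List.mem_map] at hp'
    obtain ⟨p, hp, rfl⟩ := hp'
    obtain ⟨q, hq, hf⟩ := sat_ex.mp hs.2
    exact ⟨q, hq, p, hp, hs.1, sat_toF.mp hf⟩
  · rintro ⟨q, hq, p, hp, h1, h2⟩
    exact ⟨_, List.mem_map.mpr ⟨p, hp, rfl⟩, h1, sat_ex.mpr ⟨q, hq, sat_toF.mpr h2⟩⟩

/-- Universal quantification over the left word. -/
def allU (L : List (Pair A)) : List (Pair A) :=
  L.sublists.map fun S =>
    (some (FO.all (bigOr (S.map (toF ∘ Prod.fst)))), bigAndO (S.map Prod.snd))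

/-- Universal quantification over the right word. -/
def allV (L : List (Pair A)) : List (Pair A) :=
  L.sublists.map fun S =>
    (bigAndO (S.map Prod.fst), some (FO.all (bigOr (S.map (toF ∘ Prod.snd)))))

theorem satD_allU {u v : List A} {vu vv} {L : List (Pair A)} :
    SatD u v vu vv (allU L) ↔ ∀ q < u.length, SatD u v (vcons q vu) vv L := by
  constructor
  · rintro ⟨p', hp', hs⟩ q hq
    simp only [allU, List.mem_map] at hp'
    obtain ⟨S, hS, rfl⟩ := hp'
    have hS' := List.mem_sublists.mp hS
    obtain ⟨f, hf, hsat⟩ := sat_bigOr.mp (sat_all.mp hs.1 q hq)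
    simp only [List.mem_map, Function.comp] at hf
    obtain ⟨p, hpS, rfl⟩ := hf
    refine ⟨p, hS'.subset hpS, sat_toF.mp hsat, ?_⟩
    exact satO_bigAndO.mp hs.2 p.2 (List.mem_map.mpr ⟨p, hpS, rfl⟩)
  · intro h
    classical
    refine ⟨_, List.mem_map.mpr
      ⟨L.filter (fun p => decide (SatO v vv p.2)),
       List.mem_sublists.mpr List.filter_sublist, rfl⟩, ?_, ?_⟩
    · rw [satO_some, sat_all]
      intro q hq
      obtain ⟨p, hpL, h1, h2⟩ := h q hq
      rw [sat_bigOr]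
      refine ⟨toF p.1, List.mem_map.mpr ⟨p, List.mem_filter.mpr ⟨hpL, by simpa using h2⟩, rfl⟩,
        sat_toF.mpr h1⟩
    · rw [satO_bigAndO]
      intro o ho
      obtain ⟨p, hpS, rfl⟩ := List.mem_map.mp ho
      simpa using (List.mem_filter.mp hpS).2

theorem satD_allV {u v : List A} {vu vv} {L : List (Pair A)} :
    SatD u v vu vv (allV L) ↔ ∀ q < v.length, SatD u v vu (vcons q vv) L := by
  constructor
  · rintro ⟨p', hp', hs⟩ q hq
    simp only [allV, List.mem_map] at hp'
    obtain ⟨S, hS, rfl⟩ := hp'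
    have hS' := List.mem_sublists.mp hS
    obtain ⟨f, hf, hsat⟩ := sat_bigOr.mp (sat_all.mp hs.2 q hq)
    simp only [List.mem_map, Function.comp] at hf
    obtain ⟨p, hpS, rfl⟩ := hf
    refine ⟨p, hS'.subset hpS, ?_, sat_toF.mp hsat⟩
    exact satO_bigAndO.mp hs.1 p.1 (List.mem_map.mpr ⟨p, hpS, rfl⟩)
  · intro h
    classical
    refine ⟨_, List.mem_map.mpr
      ⟨L.filter (fun p => decide (SatO u vu p.1)),
       List.mem_sublists.mpr List.filter_sublist, rfl⟩, ?_, ?_⟩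
    · rw [satO_bigAndO]
      intro o ho
      obtain ⟨p, hpS, rfl⟩ := List.mem_map.mp ho
      simpa using (List.mem_filter.mp hpS).2
    · rw [satO_some, sat_all]
      intro q hq
      obtain ⟨p, hpL, h1, h2⟩ := h q hq
      rw [sat_bigOr]
      refine ⟨toF p.2, List.mem_map.mpr ⟨p, List.mem_filter.mpr ⟨hpL, by simpa using h1⟩, rfl⟩,
        sat_toF.mpr h2⟩


/-- `rk σ b x` = number of `y < x` with `σ y = b`: the `b`-side de Bruijn
index corresponding to the overall index `x`. -/
def rk (σ : ℕ → Bool) (b : Bool) : ℕ → ℕ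
  | 0 => 0
  | n + 1 => rk σ b n + (if σ n = b then 1 else 0)

@[simp] theorem rk_zero {σ : ℕ → Bool} {b} : rk σ b 0 = 0 := rfl

@[simp] theorem vcons_zero {p : ℕ} {v : ℕ → ℕ} : vcons p v 0 = p := rfl
@[simp] theorem vcons_succ {p : ℕ} {v : ℕ → ℕ} {n} : vcons p v (n + 1) = v n := rfl
@[simp] theorem vcons_one_add {p : ℕ} {v : ℕ → ℕ} {n} : vcons p v (1 + n) = v n := by
  rw [Nat.add_comm]; rfl
@[simp] theorem bcons_zero {b : Bool} {σ : ℕ → Bool} : bcons b σ 0 = b := rfl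
@[simp] theorem bcons_succ {b : Bool} {σ : ℕ → Bool} {n} : bcons b σ (n + 1) = σ n := rfl

theorem rk_cons {b c : Bool} {σ : ℕ → Bool} :
    ∀ n, rk (bcons b σ) c (n + 1) = (if b = c then 1 else 0) + rk σ c n
  | 0 => by simp [rk]; congr
  | n + 1 => by
    rw [show rk (bcons b σ) c (n + 1 + 1)
        = rk (bcons b σ) c (n + 1) + (if bcons b σ (n + 1) = c then 1 else 0) from rfl,
      rk_cons n, bcons_succ,
      show rk σ c (n + 1) = rk σ c n + (if σ n = c then 1 else 0) from rfl]
    omega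

theorem rk_mono {σ : ℕ → Bool} {b} {m n : ℕ} (h : m ≤ n) : rk σ b m ≤ rk σ b n := by
  induction h with
  | refl => exact le_rfl
  | step _ ih => exact le_trans ih (by simp [rk])

/-- The combined valuation on `u ++ v` determined by a side assignment and
valuations on the two sides. -/
def cmb (σ : ℕ → Bool) (ul : ℕ) (vu vv : ℕ → ℕ) : ℕ → ℕ := fun x =>
  if σ x then vu (rk σ true x) else ul + vv (rk σ false x)

theorem cmb_cons_true {σ : ℕ → Bool} {ul} {vu vv : ℕ → ℕ} {p : ℕ} :
    vcons p (cmb σ ul vu vv) = cmb (bcons true σ) ul (vcons p vu) vv := by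
  funext n
  cases n with
  | zero => simp [cmb]
  | succ n =>
    simp only [vcons_succ, cmb, bcons_succ, rk_cons]
    cases h : σ n <;> simp [h]

theorem cmb_cons_false {σ : ℕ → Bool} {ul} {vu vv : ℕ → ℕ} {q : ℕ} :
    vcons (ul + q) (cmb σ ul vu vv) = cmb (bcons false σ) ul vu (vcons q vv) := by
  funext n
  cases n with
  | zero => simp [cmb]
  | succ n =>
    simp only [vcons_succ, cmb, bcons_succ, rk_cons]
    cases h : σ n <;> simp [h]

/-- The range condition on the side valuations. -/
def Rng (σ : ℕ → Bool) (vu vv : ℕ → ℕ) (u v : List A) (m : ℕ) : Prop :=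
  ∀ x < m, (σ x = true → vu (rk σ true x) < u.length) ∧
    (σ x = false → vv (rk σ false x) < v.length)

theorem Rng.mono {σ vu vv} {u v : List A} {m m' : ℕ} (h : Rng σ vu vv u v m) (hm : m' ≤ m) :
    Rng σ vu vv u v m' := fun x hx => h x (by omega)

theorem Rng.cons_true {σ vu vv} {u v : List A} {m : ℕ}
    (h : Rng σ vu vv u v (m - 1)) {p : ℕ} (hp : p < u.length) :
    Rng (bcons true σ) (vcons p vu) vv u v m := by
  rintro x hx
  rcases x with _ | x
  · exact ⟨fun _ => by simpa, fun h => by simp at h⟩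
  · have hx' := h x (by omega)
    refine ⟨fun hs => ?_, fun hs => ?_⟩ <;> rw [bcons_succ] at hs
    · simpa [rk_cons, hs] using hx'.1 hs
    · simpa [rk_cons, hs] using hx'.2 hs

theorem Rng.cons_false {σ vu vv} {u v : List A} {m : ℕ}
    (h : Rng σ vu vv u v (m - 1)) {q : ℕ} (hq : q < v.length) :
    Rng (bcons false σ) vu (vcons q vv) u v m := by
  rintro x hx
  rcases x with _ | x
  · exact ⟨fun h => by simp at h, fun _ => by simpa⟩
  · have hx' := h x (by omega)
    refine ⟨fun hs => ?_, fun hs => ?_⟩ <;> rw [bcons_succ] at hs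
    · simpa [rk_cons, hs] using hx'.1 hs
    · simpa [rk_cons, hs] using hx'.2 hs

/-- The Feferman–Vaught style decomposition of a formula along a side
assignment `σ`, as a DNF list of pairs of formulas. -/
def FV : FO A → (ℕ → Bool) → List (Pair A)
  | .letter a x, σ =>
      if σ x then [(some (.letter a (rk σ true x)), none)]
      else [(none, some (.letter a (rk σ false x)))]
  | .lt x y, σ =>
      match σ x, σ y with
      | true, true => [(some (.lt (rk σ true x) (rk σ true y)), none)]
      | false, false => [(none, some (.lt (rk σ false x) (rk σ false y)))]
      | true, false => [(none, none)]
      | false, true => []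
  | .not φ, σ => notD (FV φ σ)
  | .and φ ψ, σ => andD (FV φ σ) (FV ψ σ)
  | .or φ ψ, σ => FV φ σ ++ FV ψ σ
  | .ex φ, σ => exU (FV φ (bcons true σ)) ++ exV (FV φ (bcons false σ))
  | .all φ, σ => andD (allU (FV φ (bcons true σ))) (allV (FV φ (bcons false σ)))

/-- Main semantic correctness of the decomposition. -/
theorem FV_sat (φ : FO A) (σ : ℕ → Bool) (u v : List A) (vu vv : ℕ → ℕ)
    (hr : Rng σ vu vv u v (fvBound φ)) :
    Sat (u ++ v) (cmb σ u.length vu vv) φ ↔ SatD u v vu vv (FV φ σ) := by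
  induction φ generalizing σ vu vv with
  | letter a x =>
    have hx := hr x (by simp [fvBound])
    rw [show Sat (u ++ v) (cmb σ u.length vu vv) (.letter a x) ↔
      ((u ++ v)[(cmb σ u.length vu vv) x]? = some a) from Iff.rfl]
    cases h : σ x with
    | true =>
      have hlt := hx.1 h
      simp only [cmb, h, if_true]
      rw [List.getElem?_append, if_pos hlt]
      simp [FV, h, SatD, SatP, SatO, Sat]
    | false =>
      simp only [cmb, h, Bool.false_eq_true, if_false]
      rw [List.getElem?_append, if_neg (by omega), Nat.add_sub_cancel_left]
      simp [FV, h, SatD, SatP, SatO, Sat]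
  | lt x y =>
    have hx := hr x (by simp [fvBound])
    have hy := hr y (by simp [fvBound])
    rw [show Sat (u ++ v) (cmb σ u.length vu vv) (.lt x y) ↔
      ((cmb σ u.length vu vv) x < (cmb σ u.length vu vv) y ∧
        (cmb σ u.length vu vv) y < (u ++ v).length) from Iff.rfl]
    cases hsx : σ x <;> cases hsy : σ y
    · have h1 := hx.2 hsx; have h2 := hy.2 hsy
      simp only [FV, cmb, hsx, hsy, List.length_append]
      simp [SatD, SatP, SatO, Sat] <;> omega
    · have h1 := hx.2 hsx; have h2 := hy.1 hsy
      simp only [FV, cmb, hsx, hsy, List.length_append]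
      simp [SatD, SatP, SatO, Sat] <;> omega
    · have h1 := hx.1 hsx; have h2 := hy.2 hsy
      simp only [FV, cmb, hsx, hsy, List.length_append]
      simp [SatD, SatP, SatO, Sat] <;> omega
    · have h1 := hx.1 hsx; have h2 := hy.1 hsy
      simp only [FV, cmb, hsx, hsy, List.length_append]
      simp [SatD, SatP, SatO, Sat] <;> omega
  | not φ ih =>
    rw [sat_not, ih σ vu vv hr, FV, satD_notD]
  | and φ ψ ihφ ihψ =>
    rw [sat_and, ihφ σ vu vv (hr.mono (by simp [fvBound])),
      ihψ σ vu vv (hr.mono (by simp [fvBound])), FV, satD_andD]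
  | or φ ψ ihφ ihψ =>
    rw [sat_or, ihφ σ vu vv (hr.mono (by simp [fvBound])),
      ihψ σ vu vv (hr.mono (by simp [fvBound])), FV, satD_append]
  | ex φ ih =>
    rw [FV, satD_append, satD_exU, satD_exV, sat_ex]
    have hfv : fvBound (FO.ex φ) = fvBound φ - 1 := rfl
    rw [hfv] at hr
    constructor
    · rintro ⟨p, hp, hs⟩
      rw [List.length_append] at hp
      rcases Nat.lt_or_ge p u.length with hpu | hpu
      · exact Or.inl ⟨p, hpu, (ih _ _ _ (hr.cons_true hpu)).mp (by rwa [← cmb_cons_true])⟩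
      · obtain ⟨q, rfl⟩ := Nat.exists_eq_add_of_le hpu
        exact Or.inr ⟨q, by omega,
          (ih _ _ _ (hr.cons_false (by omega))).mp (by rwa [← cmb_cons_false])⟩
    · rintro (⟨q, hq, hs⟩ | ⟨q, hq, hs⟩)
      · refine ⟨q, by rw [List.length_append]; omega, ?_⟩
        have := (ih _ _ _ (hr.cons_true hq)).mpr hs
        rwa [← cmb_cons_true] at this
      · refine ⟨u.length + q, by rw [List.length_append]; omega, ?_⟩
        have := (ih _ _ _ (hr.cons_false hq)).mpr hs
        rwa [← cmb_cons_false] at this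
  | all φ ih =>
    rw [FV, satD_andD, satD_allU, satD_allV, sat_all]
    have hfv : fvBound (FO.all φ) = fvBound φ - 1 := rfl
    rw [hfv] at hr
    constructor
    · intro h
      refine ⟨fun q hq => ?_, fun q hq => ?_⟩
      · exact (ih _ _ _ (hr.cons_true hq)).mp
          (by rw [← cmb_cons_true]; exact h q (by rw [List.length_append]; omega))
      · exact (ih _ _ _ (hr.cons_false hq)).mp
          (by rw [← cmb_cons_false]; exact h (u.length + q) (by rw [List.length_append]; omega))
    · rintro ⟨h1, h2⟩ p hp
      rw [List.length_append] at hp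
      rcases Nat.lt_or_ge p u.length with hpu | hpu
      · have := (ih _ _ _ (hr.cons_true hpu)).mpr (h1 p hpu)
        rwa [← cmb_cons_true] at this
      · obtain ⟨q, rfl⟩ := Nat.exists_eq_add_of_le hpu
        have := (ih _ _ _ (hr.cons_false (by omega))).mpr (h2 q (by omega))
        rwa [← cmb_cons_false] at this


/-! ### Structural facts about the decomposition -/

def qrO : Option (FO A) → ℕ
  | none => 0
  | some f => qr f

def fvO : Option (FO A) → ℕ
  | none => 0
  | some f => fvBound f

@[simp] theorem qrO_none : qrO (none : Option (FO A)) = 0 := rfl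
@[simp] theorem qrO_some {f : FO A} : qrO (some f) = qr f := rfl
@[simp] theorem fvO_none : fvO (none : Option (FO A)) = 0 := rfl
@[simp] theorem fvO_some {f : FO A} : fvO (some f) = fvBound f := rfl

theorem qrO_andO_le {a b : Option (FO A)} : qrO (andO a b) ≤ max (qrO a) (qrO b) := by
  cases a <;> cases b <;> simp [andO, qrO, qr]

theorem fvO_andO_le {a b : Option (FO A)} : fvO (andO a b) ≤ max (fvO a) (fvO b) := by
  cases a <;> cases b <;> simp [andO, fvO, fvBound]

@[simp] theorem qr_toF {o : Option (FO A)} : qr (toF o) = qrO o := by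
  cases o <;> rfl

theorem fv_toF_le {o : Option (FO A)} : fvBound (toF o) ≤ max (fvO o) 1 := by
  cases o <;> simp [toF, tru, fvBound]

theorem qr_bigOr_le {l : List (FO A)} {n : ℕ} (h : ∀ f ∈ l, qr f ≤ n) :
    qr (bigOr l) ≤ n := by
  induction l with
  | nil => exact Nat.zero_le n
  | cons f l ih =>
    have : qr (bigOr (f :: l)) = max (qr f) (qr (bigOr l)) := rfl
    rw [this]
    exact max_le (h f List.mem_cons_self) (ih fun g hg => h g (List.mem_cons_of_mem _ hg))

theorem fv_bigOr_le {l : List (FO A)} {n : ℕ} (h1 : 1 ≤ n) (h : ∀ f ∈ l, fvBound f ≤ n) :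
    fvBound (bigOr l) ≤ n := by
  induction l with
  | nil => simpa [bigOr, fvBound]
  | cons f l ih =>
    have : fvBound (bigOr (f :: l)) = max (fvBound f) (fvBound (bigOr l)) := rfl
    rw [this]
    exact max_le (h f List.mem_cons_self) (ih fun g hg => h g (List.mem_cons_of_mem _ hg))

theorem qrO_bigAndO_le {l : List (Option (FO A))} {n : ℕ} (h : ∀ o ∈ l, qrO o ≤ n) :
    qrO (bigAndO l) ≤ n := by
  induction l with
  | nil => exact Nat.zero_le n
  | cons o l ih =>
    exact le_trans qrO_andO_le (max_le (h o List.mem_cons_self)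
      (ih fun g hg => h g (List.mem_cons_of_mem _ hg)))

theorem fvO_bigAndO_le {l : List (Option (FO A))} {n : ℕ} (h : ∀ o ∈ l, fvO o ≤ n) :
    fvO (bigAndO l) ≤ n := by
  induction l with
  | nil => exact Nat.zero_le n
  | cons o l ih =>
    exact le_trans fvO_andO_le (max_le (h o List.mem_cons_self)
      (ih fun g hg => h g (List.mem_cons_of_mem _ hg)))

theorem mem_exU {q : Pair A} {L : List (Pair A)} (h : q ∈ exU L) :
    ∃ p ∈ L, q = (some (FO.ex (toF p.1)), p.2) := by
  simp only [exU, List.mem_map] at h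
  obtain ⟨p, hp, rfl⟩ := h; exact ⟨p, hp, rfl⟩

theorem mem_exV {q : Pair A} {L : List (Pair A)} (h : q ∈ exV L) :
    ∃ p ∈ L, q = (p.1, some (FO.ex (toF p.2))) := by
  simp only [exV, List.mem_map] at h
  obtain ⟨p, hp, rfl⟩ := h; exact ⟨p, hp, rfl⟩

theorem mem_allU {q : Pair A} {L : List (Pair A)} (h : q ∈ allU L) :
    ∃ S : List (Pair A), S.Sublist L ∧
      q = (some (FO.all (bigOr (S.map (toF ∘ Prod.fst)))), bigAndO (S.map Prod.snd)) := by
  simp only [allU, List.mem_map] at h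
  obtain ⟨S, hS, rfl⟩ := h
  exact ⟨S, List.mem_sublists.mp hS, rfl⟩

theorem mem_allV {q : Pair A} {L : List (Pair A)} (h : q ∈ allV L) :
    ∃ S : List (Pair A), S.Sublist L ∧
      q = (bigAndO (S.map Prod.fst), some (FO.all (bigOr (S.map (toF ∘ Prod.snd))))) := by
  simp only [allV, List.mem_map] at h
  obtain ⟨S, hS, rfl⟩ := h
  exact ⟨S, List.mem_sublists.mp hS, rfl⟩

theorem andD_pres {P Q : Option (FO A) → Prop}
    (hP : ∀ a b, P a → P b → P (andO a b)) (hQ : ∀ a b, Q a → Q b → Q (andO a b))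
    {L1 L2 : List (Pair A)} (h1 : ∀ p ∈ L1, P p.1 ∧ Q p.2) (h2 : ∀ p ∈ L2, P p.1 ∧ Q p.2) :
    ∀ p ∈ andD L1 L2, P p.1 ∧ Q p.2 := by
  intro p hp
  obtain ⟨a, ha, b, hb, rfl⟩ := mem_andD hp
  exact ⟨hP _ _ (h1 a ha).1 (h2 b hb).1, hQ _ _ (h1 a ha).2 (h2 b hb).2⟩

theorem notD_pres {P Q : Option (FO A) → Prop}
    (hPn : P none) (hQn : Q none)
    (hPa : ∀ a b, P a → P b → P (andO a b)) (hQa : ∀ a b, Q a → Q b → Q (andO a b))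
    (hPno : ∀ f, P (some f) → P (some (FO.not f)))
    (hQno : ∀ f, Q (some f) → Q (some (FO.not f)))
    {L : List (Pair A)} (hL : ∀ p ∈ L, P p.1 ∧ Q p.2) :
    ∀ q ∈ notD L, P q.1 ∧ Q q.2 := by
  induction L with
  | nil =>
    intro q hq
    simp only [notD, List.mem_singleton] at hq
    subst hq
    exact ⟨hPn, hQn⟩
  | cons p L ih =>
    intro q hq
    obtain ⟨a, ha, b, hb, rfl⟩ := mem_andD hq
    have hb' := ih (fun r hr => hL r (List.mem_cons_of_mem _ hr)) b hb
    have hp := hL p List.mem_cons_self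
    have ha' : P a.1 ∧ Q a.2 := by
      obtain ⟨p1, p2⟩ := p
      cases p1 <;> cases p2 <;> simp only [negP, List.mem_singleton, List.mem_cons,
        List.not_mem_nil, or_false, List.mem_nil_iff] at ha
      · subst ha; exact ⟨hPn, hQno _ hp.2⟩
      · subst ha; exact ⟨hPno _ hp.1, hQn⟩
      · rcases ha with rfl | rfl
        · exact ⟨hPno _ hp.1, hQn⟩
        · exact ⟨hPn, hQno _ hp.2⟩
    exact ⟨hPa _ _ ha'.1 hb'.1, hQa _ _ ha'.2 hb'.2⟩


theorem rk_succ_true {σ : ℕ → Bool} {x : ℕ} (h : σ x = true) :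
    rk σ true (x + 1) = rk σ true x + 1 := by simp [rk, h]

theorem rk_succ_false {σ : ℕ → Bool} {x : ℕ} (h : σ x = false) :
    rk σ false (x + 1) = rk σ false x + 1 := by simp [rk, h]

theorem rk_bcons_ne {b c : Bool} {σ : ℕ → Bool} {m : ℕ} (h : b ≠ c) :
    rk (bcons b σ) c m ≤ rk σ c (m - 1) := by
  cases m with
  | zero => simp
  | succ m => rw [rk_cons, if_neg h]; simp

theorem rk_bcons_eq {b : Bool} {σ : ℕ → Bool} {m : ℕ} :
    rk (bcons b σ) b m ≤ rk σ b (m - 1) + 1 := by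
  cases m with
  | zero => simp
  | succ m => rw [rk_cons, if_pos rfl]; simp [Nat.add_comm]

theorem max_rk_bcons {b : Bool} {σ : ℕ → Bool} {m : ℕ} :
    max (rk (bcons b σ) b m) 1 - 1 ≤ rk σ b (m - 1) := by
  cases m with
  | zero => simp
  | succ m => rw [rk_cons, if_pos rfl]; simp only [Nat.add_sub_cancel]; omega

/-- Quantifier rank bound for the components of the decomposition. -/
theorem FV_qr (φ : FO A) (σ : ℕ → Bool) :
    ∀ p ∈ FV φ σ, qrO p.1 ≤ qr φ ∧ qrO p.2 ≤ qr φ := by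
  induction φ generalizing σ with
  | letter a x =>
    intro p hp
    by_cases h : σ x = true <;> simp [FV, h] at hp <;> subst hp <;> simp [qr]
  | lt x y =>
    intro p hp
    cases hsx : σ x <;> cases hsy : σ y <;>
      simp only [FV, hsx, hsy, List.mem_singleton, List.not_mem_nil] at hp
    all_goals first
      | exact hp.elim
      | (subst hp; simp [qr])
  | not φ ih =>
    intro p hp
    simp only [FV] at hp
    have key : qrO p.1 ≤ qr φ ∧ qrO p.2 ≤ qr φ :=
      notD_pres (P := fun o => qrO o ≤ qr φ) (Q := fun o => qrO o ≤ qr φ)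
        (Nat.zero_le _) (Nat.zero_le _)
        (fun a b ha hb => le_trans qrO_andO_le (max_le ha hb))
        (fun a b ha hb => le_trans qrO_andO_le (max_le ha hb))
        (fun f hf => hf) (fun f hf => hf) (ih σ) p hp
    exact key
  | and φ ψ ihφ ihψ =>
    intro p hp
    simp only [FV] at hp
    have key := andD_pres
      (P := fun o => qrO o ≤ max (qr φ) (qr ψ)) (Q := fun o => qrO o ≤ max (qr φ) (qr ψ))
      (fun a b ha hb => le_trans qrO_andO_le (max_le ha hb))
      (fun a b ha hb => le_trans qrO_andO_le (max_le ha hb))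
      (fun p hp => ⟨le_trans ((ihφ σ) p hp).1 (le_max_left _ _),
        le_trans ((ihφ σ) p hp).2 (le_max_left _ _)⟩)
      (fun p hp => ⟨le_trans ((ihψ σ) p hp).1 (le_max_right _ _),
        le_trans ((ihψ σ) p hp).2 (le_max_right _ _)⟩) p hp
    exact key
  | or φ ψ ihφ ihψ =>
    intro p hp
    simp only [FV] at hp
    rcases List.mem_append.mp hp with h | h
    · exact ⟨le_trans ((ihφ σ) p h).1 (le_max_left _ _),
        le_trans ((ihφ σ) p h).2 (le_max_left _ _)⟩
    · exact ⟨le_trans ((ihψ σ) p h).1 (le_max_right _ _),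
        le_trans ((ihψ σ) p h).2 (le_max_right _ _)⟩
  | ex φ ih =>
    intro p hp
    simp only [FV] at hp
    rcases List.mem_append.mp hp with h | h
    · obtain ⟨a, ha, rfl⟩ := mem_exU h
      have := ih (bcons true σ) a ha
      refine ⟨?_, le_trans this.2 (Nat.le_succ _)⟩
      show qr (toF a.1) + 1 ≤ qr φ + 1
      simpa using this.1
    · obtain ⟨a, ha, rfl⟩ := mem_exV h
      have := ih (bcons false σ) a ha
      refine ⟨le_trans this.1 (Nat.le_succ _), ?_⟩
      show qr (toF a.2) + 1 ≤ qr φ + 1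
      simpa using this.2
  | all φ ih =>
    intro p hp
    simp only [FV] at hp
    refine andD_pres
      (P := fun o => qrO o ≤ qr φ + 1) (Q := fun o => qrO o ≤ qr φ + 1)
      (fun a b ha hb => le_trans qrO_andO_le (max_le ha hb))
      (fun a b ha hb => le_trans qrO_andO_le (max_le ha hb)) ?_ ?_ p hp
    · intro p hp
      obtain ⟨S, hS, rfl⟩ := mem_allU hp
      constructor
      · show qr (bigOr (S.map (toF ∘ Prod.fst))) + 1 ≤ qr φ + 1
        have : qr (bigOr (S.map (toF ∘ Prod.fst))) ≤ qr φ := by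
          refine qr_bigOr_le ?_
          intro f hf
          obtain ⟨a, ha, rfl⟩ := List.mem_map.mp hf
          simpa using (ih (bcons true σ) a (hS.subset ha)).1
        omega
      · refine le_trans (qrO_bigAndO_le ?_) (Nat.le_succ _)
        intro o ho
        obtain ⟨a, ha, rfl⟩ := List.mem_map.mp ho
        exact (ih (bcons true σ) a (hS.subset ha)).2
    · intro p hp
      obtain ⟨S, hS, rfl⟩ := mem_allV hp
      constructor
      · refine le_trans (qrO_bigAndO_le ?_) (Nat.le_succ _)
        intro o ho
        obtain ⟨a, ha, rfl⟩ := List.mem_map.mp ho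
        exact (ih (bcons false σ) a (hS.subset ha)).1
      · show qr (bigOr (S.map (toF ∘ Prod.snd))) + 1 ≤ qr φ + 1
        have : qr (bigOr (S.map (toF ∘ Prod.snd))) ≤ qr φ := by
          refine qr_bigOr_le ?_
          intro f hf
          obtain ⟨a, ha, rfl⟩ := List.mem_map.mp hf
          simpa using (ih (bcons false σ) a (hS.subset ha)).2
        omega

/-- Free-variable bound for the components of the decomposition. -/
theorem FV_fv (φ : FO A) (σ : ℕ → Bool) :
    ∀ p ∈ FV φ σ, fvO p.1 ≤ rk σ true (fvBound φ) ∧ fvO p.2 ≤ rk σ false (fvBound φ) := by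
  induction φ generalizing σ with
  | letter a x =>
    intro p hp
    by_cases h : σ x = true <;> simp only [FV, h, Bool.false_eq_true, if_true, if_false,
      List.mem_singleton] at hp
    · subst hp
      have := rk_succ_true h
      constructor
      · show rk σ true x + 1 ≤ rk σ true (fvBound (FO.letter a x)); simp [fvBound]; omega
      · simp
    · replace h : σ x = false := by revert h; cases σ x <;> simp
      subst hp
      have := rk_succ_false h
      constructor
      · simp
      · show rk σ false x + 1 ≤ rk σ false (fvBound (FO.letter a x)); simp [fvBound]; omega
  | lt x y =>
    intro p hp
    cases hsx : σ x <;> cases hsy : σ y <;>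
      simp only [FV, hsx, hsy, List.mem_singleton, List.not_mem_nil] at hp
    · subst hp
      refine ⟨by simp, ?_⟩
      show max (rk σ false x) (rk σ false y) + 1 ≤ rk σ false (max x y + 1)
      have hm : σ (max x y) = false := by
        rcases Nat.le_total x y with h | h
        · rw [Nat.max_eq_right h]; exact hsy
        · rw [Nat.max_eq_left h]; exact hsx
      have := rk_succ_false hm
      have h1 : rk σ false x ≤ rk σ false (max x y) := rk_mono (le_max_left _ _)
      have h2 : rk σ false y ≤ rk σ false (max x y) := rk_mono (le_max_right _ _)
      omega
    · subst hp; exact ⟨by simp, by simp⟩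
    · subst hp
      refine ⟨?_, by simp⟩
      show max (rk σ true x) (rk σ true y) + 1 ≤ rk σ true (max x y + 1)
      have hm : σ (max x y) = true := by
        rcases Nat.le_total x y with h | h
        · rw [Nat.max_eq_right h]; exact hsy
        · rw [Nat.max_eq_left h]; exact hsx
      have := rk_succ_true hm
      have h1 : rk σ true x ≤ rk σ true (max x y) := rk_mono (le_max_left _ _)
      have h2 : rk σ true y ≤ rk σ true (max x y) := rk_mono (le_max_right _ _)
      omega
  | not φ ih =>
    intro p hp
    simp only [FV] at hp
    exact notD_pres (P := fun o => fvO o ≤ rk σ true (fvBound φ))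
      (Q := fun o => fvO o ≤ rk σ false (fvBound φ))
      (Nat.zero_le _) (Nat.zero_le _)
      (fun a b ha hb => le_trans fvO_andO_le (max_le ha hb))
      (fun a b ha hb => le_trans fvO_andO_le (max_le ha hb))
      (fun f hf => hf) (fun f hf => hf) (ih σ) p hp
  | and φ ψ ihφ ihψ =>
    intro p hp
    simp only [FV] at hp
    refine andD_pres
      (P := fun o => fvO o ≤ rk σ true (max (fvBound φ) (fvBound ψ)))
      (Q := fun o => fvO o ≤ rk σ false (max (fvBound φ) (fvBound ψ)))
      (fun a b ha hb => le_trans fvO_andO_le (max_le ha hb))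
      (fun a b ha hb => le_trans fvO_andO_le (max_le ha hb)) ?_ ?_ p hp
    · exact fun p hp => ⟨le_trans ((ihφ σ) p hp).1 (rk_mono (le_max_left _ _)),
        le_trans ((ihφ σ) p hp).2 (rk_mono (le_max_left _ _))⟩
    · exact fun p hp => ⟨le_trans ((ihψ σ) p hp).1 (rk_mono (le_max_right _ _)),
        le_trans ((ihψ σ) p hp).2 (rk_mono (le_max_right _ _))⟩
  | or φ ψ ihφ ihψ =>
    intro p hp
    simp only [FV] at hp
    rcases List.mem_append.mp hp with h | h
    · exact ⟨le_trans ((ihφ σ) p h).1 (rk_mono (le_max_left _ _)),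
        le_trans ((ihφ σ) p h).2 (rk_mono (le_max_left _ _))⟩
    · exact ⟨le_trans ((ihψ σ) p h).1 (rk_mono (le_max_right _ _)),
        le_trans ((ihψ σ) p h).2 (rk_mono (le_max_right _ _))⟩
  | ex φ ih =>
    intro p hp
    simp only [FV] at hp
    rcases List.mem_append.mp hp with h | h
    · obtain ⟨a, ha, rfl⟩ := mem_exU h
      have h1 := ih (bcons true σ) a ha
      constructor
      · show fvBound (toF a.1) - 1 ≤ rk σ true (fvBound φ - 1)
        have h2 : fvBound (toF a.1) ≤ max (rk (bcons true σ) true (fvBound φ)) 1 :=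
          le_trans fv_toF_le (max_le_max h1.1 le_rfl)
        have h3 := max_rk_bcons (b := true) (σ := σ) (m := fvBound φ)
        omega
      · show fvO a.2 ≤ rk σ false (fvBound φ - 1)
        exact le_trans h1.2 (rk_bcons_ne (by simp))
    · obtain ⟨a, ha, rfl⟩ := mem_exV h
      have h1 := ih (bcons false σ) a ha
      constructor
      · show fvO a.1 ≤ rk σ true (fvBound φ - 1)
        exact le_trans h1.1 (rk_bcons_ne (by simp))
      · show fvBound (toF a.2) - 1 ≤ rk σ false (fvBound φ - 1)
        have h2 : fvBound (toF a.2) ≤ max (rk (bcons false σ) false (fvBound φ)) 1 :=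
          le_trans fv_toF_le (max_le_max h1.2 le_rfl)
        have h3 := max_rk_bcons (b := false) (σ := σ) (m := fvBound φ)
        omega
  | all φ ih =>
    intro p hp
    simp only [FV] at hp
    refine andD_pres
      (P := fun o => fvO o ≤ rk σ true (fvBound φ - 1))
      (Q := fun o => fvO o ≤ rk σ false (fvBound φ - 1))
      (fun a b ha hb => le_trans fvO_andO_le (max_le ha hb))
      (fun a b ha hb => le_trans fvO_andO_le (max_le ha hb)) ?_ ?_ p hp
    · intro p hp
      obtain ⟨S, hS, rfl⟩ := mem_allU hp
      constructor
      · show fvBound (bigOr (S.map (toF ∘ Prod.fst))) - 1 ≤ rk σ true (fvBound φ - 1)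
        have h2 : fvBound (bigOr (S.map (toF ∘ Prod.fst))) ≤
            max (rk (bcons true σ) true (fvBound φ)) 1 := by
          refine fv_bigOr_le (le_max_right _ _) ?_
          intro f hf
          obtain ⟨a, ha, rfl⟩ := List.mem_map.mp hf
          exact le_trans fv_toF_le
            (max_le_max (ih (bcons true σ) a (hS.subset ha)).1 le_rfl)
        have h3 := max_rk_bcons (b := true) (σ := σ) (m := fvBound φ)
        omega
      · show fvO (bigAndO (S.map Prod.snd)) ≤ rk σ false (fvBound φ - 1)
        refine fvO_bigAndO_le ?_
        intro o ho
        obtain ⟨a, ha, rfl⟩ := List.mem_map.mp ho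
        exact le_trans (ih (bcons true σ) a (hS.subset ha)).2 (rk_bcons_ne (by simp))
    · intro p hp
      obtain ⟨S, hS, rfl⟩ := mem_allV hp
      constructor
      · show fvO (bigAndO (S.map Prod.fst)) ≤ rk σ true (fvBound φ - 1)
        refine fvO_bigAndO_le ?_
        intro o ho
        obtain ⟨a, ha, rfl⟩ := List.mem_map.mp ho
        exact le_trans (ih (bcons false σ) a (hS.subset ha)).1 (rk_bcons_ne (by simp))
      · show fvBound (bigOr (S.map (toF ∘ Prod.snd))) - 1 ≤ rk σ false (fvBound φ - 1)
        have h2 : fvBound (bigOr (S.map (toF ∘ Prod.snd))) ≤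
            max (rk (bcons false σ) false (fvBound φ)) 1 := by
          refine fv_bigOr_le (le_max_right _ _) ?_
          intro f hf
          obtain ⟨a, ha, rfl⟩ := List.mem_map.mp hf
          exact le_trans fv_toF_le
            (max_le_max (ih (bcons false σ) a (hS.subset ha)).2 le_rfl)
        have h3 := max_rk_bcons (b := false) (σ := σ) (m := fvBound φ)
        omega


def QFO : Option (FO A) → Prop
  | none => True
  | some f => QF f

def SigO (i : ℕ) : Option (FO A) → Prop
  | none => True
  | some f => IsSigma i f

def PiO (i : ℕ) : Option (FO A) → Prop
  | none => True
  | some f => IsPi i f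

@[simp] theorem QFO_none : QFO (none : Option (FO A)) := trivial
@[simp] theorem SigO_none {i} : SigO i (none : Option (FO A)) := trivial
@[simp] theorem PiO_none {i} : PiO i (none : Option (FO A)) := trivial
@[simp] theorem QFO_some {f : FO A} : QFO (some f) ↔ QF f := Iff.rfl
@[simp] theorem SigO_some {i} {f : FO A} : SigO i (some f) ↔ IsSigma i f := Iff.rfl
@[simp] theorem PiO_some {i} {f : FO A} : PiO i (some f) ↔ IsPi i f := Iff.rfl

theorem QFO.sigO {i} {o : Option (FO A)} (h : QFO o) : SigO i o := by
  cases o with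
  | none => trivial
  | some f => exact .of_qf h

theorem QFO.piO {i} {o : Option (FO A)} (h : QFO o) : PiO i o := by
  cases o with
  | none => trivial
  | some f => exact .of_qf h

theorem SigO.piO {i} {o : Option (FO A)} (h : SigO i o) : PiO (i + 1) o := by
  cases o with
  | none => trivial
  | some f => exact .of_sigma h

theorem PiO.sigO {i} {o : Option (FO A)} (h : PiO i o) : SigO (i + 1) o := by
  cases o with
  | none => trivial
  | some f => exact .of_pi h

theorem QFO_andO {a b : Option (FO A)} (ha : QFO a) (hb : QFO b) : QFO (andO a b) := by
  cases a <;> cases b <;> first | trivial | exact ha | exact ⟨ha, hb⟩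

theorem SigO_andO {i} {a b : Option (FO A)} (ha : SigO i a) (hb : SigO i b) :
    SigO i (andO a b) := by
  cases a <;> cases b <;> first | trivial | exact ha | exact .and ha hb

theorem PiO_andO {i} {a b : Option (FO A)} (ha : PiO i a) (hb : PiO i b) :
    PiO i (andO a b) := by
  cases a <;> cases b <;> first | trivial | exact ha | exact .and ha hb

theorem QFO_not {f : FO A} (h : QFO (some f)) : QFO (some (FO.not f)) := h

theorem QF_tru : QF (tru : FO A) := trivial

theorem sig_toF {i} {o : Option (FO A)} (h : SigO i o) : IsSigma i (toF o) := by
  cases o with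
  | none => exact .of_qf QF_tru
  | some f => exact h

theorem pi_toF {i} {o : Option (FO A)} (h : PiO i o) : IsPi i (toF o) := by
  cases o with
  | none => exact .of_qf QF_tru
  | some f => exact h

theorem pi_bigOr {i} {l : List (FO A)} (h : ∀ f ∈ l, IsPi i f) : IsPi i (bigOr l) := by
  induction l with
  | nil => exact .of_qf trivial
  | cons f l ih =>
    exact .or (h f List.mem_cons_self) (ih fun g hg => h g (List.mem_cons_of_mem _ hg))

theorem sig_bigOr {i} {l : List (FO A)} (h : ∀ f ∈ l, IsSigma i f) : IsSigma i (bigOr l) := by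
  induction l with
  | nil => exact .of_qf trivial
  | cons f l ih =>
    exact .or (h f List.mem_cons_self) (ih fun g hg => h g (List.mem_cons_of_mem _ hg))

theorem pi_bigAndO {i} {l : List (Option (FO A))} (h : ∀ o ∈ l, PiO i o) :
    PiO i (bigAndO l) := by
  induction l with
  | nil => trivial
  | cons o l ih =>
    exact PiO_andO (h o List.mem_cons_self) (ih fun g hg => h g (List.mem_cons_of_mem _ hg))

theorem sig_bigAndO {i} {l : List (Option (FO A))} (h : ∀ o ∈ l, SigO i o) :
    SigO i (bigAndO l) := by
  induction l with
  | nil => trivial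
  | cons o l ih =>
    exact SigO_andO (h o List.mem_cons_self) (ih fun g hg => h g (List.mem_cons_of_mem _ hg))

/-- Classification of the components of the decomposition. -/
theorem FV_class (φ : FO A) (σ : ℕ → Bool) :
    (QF φ → ∀ p ∈ FV φ σ, QFO p.1 ∧ QFO p.2) ∧
    (∀ i, IsSigma i φ → ∀ p ∈ FV φ σ, SigO i p.1 ∧ SigO i p.2) ∧
    (∀ i, IsPi i φ → ∀ p ∈ FV φ σ, PiO i p.1 ∧ PiO i p.2) := by
  induction φ generalizing σ with
  | letter a x =>
    have hqf : ∀ p ∈ FV (FO.letter a x) σ, QFO p.1 ∧ QFO p.2 := by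
      intro p hp
      by_cases h : σ x = true <;> simp only [FV, h, Bool.false_eq_true, if_true, if_false,
        List.mem_singleton] at hp
      · subst hp; exact ⟨trivial, trivial⟩
      · replace h : σ x = false := by revert h; cases σ x <;> simp
        subst hp; exact ⟨trivial, trivial⟩
    exact ⟨fun _ => hqf, fun i _ p hp => ⟨((hqf p hp).1).sigO, ((hqf p hp).2).sigO⟩,
      fun i _ p hp => ⟨((hqf p hp).1).piO, ((hqf p hp).2).piO⟩⟩
  | lt x y =>
    have hqf : ∀ p ∈ FV (FO.lt x y : FO A) σ, QFO p.1 ∧ QFO p.2 := by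
      intro p hp
      cases hsx : σ x <;> cases hsy : σ y <;>
        simp only [FV, hsx, hsy, List.mem_singleton, List.not_mem_nil] at hp
      all_goals first
        | exact hp.elim
        | (subst hp; exact ⟨trivial, trivial⟩)
    exact ⟨fun _ => hqf, fun i _ p hp => ⟨((hqf p hp).1).sigO, ((hqf p hp).2).sigO⟩,
      fun i _ p hp => ⟨((hqf p hp).1).piO, ((hqf p hp).2).piO⟩⟩
  | not φ ih =>
    have hqf : QF φ → ∀ p ∈ FV (FO.not φ) σ, QFO p.1 ∧ QFO p.2 := by
      intro hQ p hp
      simp only [FV] at hp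
      exact notD_pres (P := QFO) (Q := QFO) trivial trivial
        (fun a b => QFO_andO) (fun a b => QFO_andO)
        (fun f hf => hf) (fun f hf => hf) ((ih σ).1 hQ) p hp
    refine ⟨hqf, fun i hs p hp => ?_, fun i hpi p hp => ?_⟩
    · have hQ : QF φ := (not_inv i).1 hs
      exact ⟨((hqf hQ p hp).1).sigO, ((hqf hQ p hp).2).sigO⟩
    · have hQ : QF φ := (not_inv i).2 hpi
      exact ⟨((hqf hQ p hp).1).piO, ((hqf hQ p hp).2).piO⟩
  | and φ ψ ihφ ihψ =>
    refine ⟨fun hQ p hp => ?_, fun i hs p hp => ?_, fun i hpi p hp => ?_⟩ <;>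
      simp only [FV] at hp
    · exact andD_pres (P := QFO) (Q := QFO) (fun a b => QFO_andO) (fun a b => QFO_andO)
        ((ihφ σ).1 hQ.1) ((ihψ σ).1 hQ.2) p hp
    · obtain ⟨h1, h2⟩ := (and_inv i).1 hs
      exact andD_pres (P := SigO i) (Q := SigO i) (fun a b => SigO_andO) (fun a b => SigO_andO)
        ((ihφ σ).2.1 i h1) ((ihψ σ).2.1 i h2) p hp
    · obtain ⟨h1, h2⟩ := (and_inv i).2 hpi
      exact andD_pres (P := PiO i) (Q := PiO i) (fun a b => PiO_andO) (fun a b => PiO_andO)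
        ((ihφ σ).2.2 i h1) ((ihψ σ).2.2 i h2) p hp
  | or φ ψ ihφ ihψ =>
    refine ⟨fun hQ p hp => ?_, fun i hs p hp => ?_, fun i hpi p hp => ?_⟩ <;>
      simp only [FV] at hp <;> rcases List.mem_append.mp hp with h | h
    · exact (ihφ σ).1 hQ.1 p h
    · exact (ihψ σ).1 hQ.2 p h
    · exact (ihφ σ).2.1 i ((or_inv i).1 hs).1 p h
    · exact (ihψ σ).2.1 i ((or_inv i).1 hs).2 p h
    · exact (ihφ σ).2.2 i ((or_inv i).2 hpi).1 p h
    · exact (ihψ σ).2.2 i ((or_inv i).2 hpi).2 p h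
  | ex φ ih =>
    have hsig : ∀ i, IsSigma i (FO.ex φ) → ∀ p ∈ FV (FO.ex φ) σ, SigO i p.1 ∧ SigO i p.2 := by
      intro i hs p hp
      obtain ⟨hi, hsφ⟩ := (ex_inv i).1 hs
      obtain ⟨i₀, rfl⟩ : ∃ i₀, i = i₀ + 1 := ⟨i - 1, by omega⟩
      simp only [FV] at hp
      rcases List.mem_append.mp hp with h | h
      · obtain ⟨a, ha, rfl⟩ := mem_exU h
        have h1 := (ih (bcons true σ)).2.1 _ hsφ a ha
        exact ⟨IsSigma.ex (sig_toF h1.1), h1.2⟩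
      · obtain ⟨a, ha, rfl⟩ := mem_exV h
        have h1 := (ih (bcons false σ)).2.1 _ hsφ a ha
        exact ⟨h1.1, IsSigma.ex (sig_toF h1.2)⟩
    refine ⟨fun hQ => hQ.elim, hsig, fun i hpi p hp => ?_⟩
    obtain ⟨i₀, rfl, hs⟩ := (ex_inv i).2 hpi
    have := hsig i₀ hs p hp
    exact ⟨this.1.piO, this.2.piO⟩
  | all φ ih =>
    have hpi : ∀ i, IsPi i (FO.all φ) → ∀ p ∈ FV (FO.all φ) σ, PiO i p.1 ∧ PiO i p.2 := by
      intro i hpi p hp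
      obtain ⟨hi, hpφ⟩ := (all_inv i).1 hpi
      obtain ⟨i₀, rfl⟩ : ∃ i₀, i = i₀ + 1 := ⟨i - 1, by omega⟩
      simp only [FV] at hp
      refine andD_pres (P := PiO (i₀ + 1)) (Q := PiO (i₀ + 1))
        (fun a b => PiO_andO) (fun a b => PiO_andO) ?_ ?_ p hp
      · intro q hq
        obtain ⟨S, hS, rfl⟩ := mem_allU hq
        constructor
        · refine IsPi.all (i := i₀) ?_
          refine pi_bigOr ?_
          intro f hf
          obtain ⟨a, ha, rfl⟩ := List.mem_map.mp hf
          exact pi_toF ((ih (bcons true σ)).2.2 _ hpφ a (hS.subset ha)).1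
        · refine pi_bigAndO ?_
          intro o ho
          obtain ⟨a, ha, rfl⟩ := List.mem_map.mp ho
          exact ((ih (bcons true σ)).2.2 _ hpφ a (hS.subset ha)).2
      · intro q hq
        obtain ⟨S, hS, rfl⟩ := mem_allV hq
        constructor
        · refine pi_bigAndO ?_
          intro o ho
          obtain ⟨a, ha, rfl⟩ := List.mem_map.mp ho
          exact ((ih (bcons false σ)).2.2 _ hpφ a (hS.subset ha)).1
        · refine IsPi.all (i := i₀) ?_
          refine pi_bigOr ?_
          intro f hf
          obtain ⟨a, ha, rfl⟩ := List.mem_map.mp hf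
          exact pi_toF ((ih (bcons false σ)).2.2 _ hpφ a (hS.subset ha)).2
    refine ⟨fun hQ => hQ.elim, fun i hs p hp => ?_, hpi⟩
    obtain ⟨i₀, rfl, hp0⟩ := (all_inv i).2 hs
    have := hpi i₀ hp0 p hp
    exact ⟨this.1.sigO, this.2.sigO⟩


/-- The `Σᵢ` rank-`k` preorder is compatible with concatenation. -/
theorem sle_append {i k : ℕ} {u u' v v' : List A}
    (hu : sle i k u u') (hv : sle i k v v') : sle i k (u ++ v) (u' ++ v') := by
  intro φ hφ hqr hsent hsat
  have hr : ∀ (a b : List A), Rng (fun _ => true) (fun _ => 0) (fun _ => 0) a b (fvBound φ) := by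
    intro a b x hx
    rw [hsent] at hx
    omega
  have hV : ∀ n : ℕ, cmb (fun _ => true) n (fun _ => 0) (fun _ => 0) = fun _ => 0 := by
    intro n; funext x; simp [cmb]
  have h1 : Sat (u ++ v) (cmb (fun _ => true) u.length (fun _ => 0) (fun _ => 0)) φ := by
    rw [hV]; exact hsat
  obtain ⟨p, hpL, hp1, hp2⟩ := (FV_sat φ (fun _ => true) u v _ _ (hr u v)).mp h1
  have hq := FV_qr φ (fun _ => true) p hpL
  have hf := FV_fv φ (fun _ => true) p hpL
  have hc := (FV_class φ (fun _ => true)).2.1 i hφ p hpL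
  have hrk : ∀ b : Bool, rk (fun _ => true) b (fvBound φ) = 0 := by
    intro b; rw [hsent]; rfl
  have h1' : SatO u' (fun _ => 0) p.1 := by
    rcases hp : p.1 with _ | f
    · trivial
    · rw [hp] at hp1 hq hf hc
      have hfs : IsSentence f := by
        have := hf.1; rw [hrk] at this; simpa [IsSentence] using this
      exact hu f hc.1 (le_trans (by simpa using hq.1) hqr) hfs hp1
  have h2' : SatO v' (fun _ => 0) p.2 := by
    rcases hp : p.2 with _ | f
    · trivial
    · rw [hp] at hp2 hq hf hc
      have hfs : IsSentence f := by
        have := hf.2; rw [hrk] at this; simpa [IsSentence] using this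
      exact hv f hc.2 (le_trans (by simpa using hq.2) hqr) hfs hp2
  have h2 := (FV_sat φ (fun _ => true) u' v' _ _ (hr u' v')).mpr ⟨p, hpL, h1', h2'⟩
  rwa [hV] at h2


end FO

/-- `(s₁,…,sₙ)` is an `i`-chain of length `n` for `α` if for every `k` there
exist words `w₁ ≤ᵏᵢ ⋯ ≤ᵏᵢ wₙ` with `α wⱼ = sⱼ`. -/
def IsChainTup {A M : Type} (i : ℕ) (α : List A → M) {n : ℕ} (s : Fin n → M) : Prop :=
  ∀ k : ℕ, ∃ w : Fin n → List A,
    (∀ j : Fin n, α (w j) = s j) ∧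
    ∀ (j : ℕ) (h : j + 1 < n),
      FO.sle i k (w ⟨j, Nat.lt_of_succ_lt h⟩) (w ⟨j + 1, h⟩)

/-- The set of `i`-chains of length `n` for a morphism `α : A* → M` into a
finite monoid is a submonoid of `M^n` under componentwise multiplication: the
constant tuple `(1,…,1)` is an `i`-chain, and the componentwise product of two
`i`-chains is an `i`-chain. -/
theorem chains_submonoid {A : Type} [Fintype A] {M : Type} [Monoid M] [Finite M]
    (i : ℕ) (α : List A → M) (hα1 : α [] = 1)
    (hα : ∀ u v : List A, α (u ++ v) = α u * α v) (n : ℕ) :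
    IsChainTup i α (fun _ : Fin n => (1 : M)) ∧
    (∀ s t : Fin n → M, IsChainTup i α s → IsChainTup i α t →
      IsChainTup i α (s * t)) := by
  constructor
  · intro k
    exact ⟨fun _ => [], fun _ => hα1, fun j h φ _ _ _ hs => hs⟩
  · intro s t hs ht k
    obtain ⟨ws, hws, hcs⟩ := hs k
    obtain ⟨wt, hwt, hct⟩ := ht k
    refine ⟨fun j => ws j ++ wt j, fun j => by rw [hα, hws, hwt]; rfl, fun j h => ?_⟩
    exact FO.sle_append (hcs j h) (hct j h)
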